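/- Let ρ ≥ 1. Then lim_{N→∞} Var(H_N)/N = 1/ρ. -/

import Mathlib

open Finset Filter Real Topology

/-- `r_{ρ,n}(i) = ρ^{-i} * C(n-1, i)^{-1}`. -/
noncomputable def rfun (ρ : ℝ) (n i : ℕ) : ℝ := (ρ ^ i * (Nat.choose (n - 1) i : ℝ))⁻¹

/-- `P(H_N ≥ k)` for `k = 1,…,N`, and `0` for `k > N`. -/
noncomputable def tailP (ρ : ℝ) (N k : ℕ) : ℝ :=
  if k ≤ N then (∑ i ∈ Finset.range k, rfun ρ N i)⁻¹ else 0

/-- `P(H_N = k) = P(H_N ≥ k) − P(H_N ≥ k+1)`. -/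
noncomputable def pmfP (ρ : ℝ) (N k : ℕ) : ℝ := tailP ρ N k - tailP ρ N (k + 1)

/-- `E(H_N) = ∑_{k=1}^N P(H_N ≥ k)`. -/
noncomputable def EH (ρ : ℝ) (N : ℕ) : ℝ := ∑ k ∈ Finset.Icc 1 N, tailP ρ N k

/-- `Var(H_N) = ∑_{k=1}^N (k − E(H_N))² P(H_N = k)`. -/
noncomputable def VarH (ρ : ℝ) (N : ℕ) : ℝ :=
  ∑ k ∈ Finset.Icc 1 N, ((k : ℝ) - EH ρ N) ^ 2 * pmfP ρ N k

/-- `P(H_N ≤ t)` for a real threshold `t`. -/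
noncomputable def cdfP (ρ : ℝ) (N : ℕ) (t : ℝ) : ℝ :=
  ∑ k ∈ (Finset.Icc 1 N).filter (fun k : ℕ => (k : ℝ) ≤ t), pmfP ρ N k

/-! basic lemmas -/

lemma choose_mono_of_half {n a b : ℕ} (hab : a ≤ b) (hb : 2 * b ≤ n) :
    n.choose a ≤ n.choose b := by
  induction b, hab using Nat.le_induction with
  | base => exact le_rfl
  | succ b hb' ih =>
    exact le_trans (ih (by omega)) (Nat.choose_le_succ_of_lt_half_left (by omega))

lemma choose_le_of_between {n a k : ℕ} (h1 : a ≤ k) (h2 : a + k ≤ n) :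
    n.choose a ≤ n.choose k := by
  rcases le_or_gt (2 * k) n with h | h
  · exact choose_mono_of_half h1 h
  · have hkn : k ≤ n := by omega
    rw [← Nat.choose_symm hkn]
    exact choose_mono_of_half (by omega) (by omega)

lemma rfun_zero (ρ : ℝ) (N : ℕ) : rfun ρ N 0 = 1 := by simp [rfun]

lemma rfun_nonneg {ρ : ℝ} (hρ : 0 < ρ) (N i : ℕ) : 0 ≤ rfun ρ N i := by
  unfold rfun
  positivity

lemma rfun_pos {ρ : ℝ} (hρ : 0 < ρ) {N i : ℕ} (hi : i ≤ N - 1) : 0 < rfun ρ N i := by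
  unfold rfun
  have hc : (0 : ℝ) < ((N - 1).choose i : ℝ) := by
    exact_mod_cast Nat.choose_pos hi
  exact inv_pos.mpr (mul_pos (pow_pos hρ i) hc)

lemma rfun_le_inv_choose {ρ : ℝ} (hρ : 1 ≤ ρ) (N i : ℕ) :
    rfun ρ N i ≤ (((N - 1).choose i : ℝ))⁻¹ := by
  unfold rfun
  rcases Nat.eq_zero_or_pos ((N - 1).choose i) with h | h
  · simp [h]
  · have hc : (0 : ℝ) < ((N - 1).choose i : ℝ) := by exact_mod_cast h
    have h1 : (1:ℝ) ≤ ρ ^ i := one_le_pow₀ hρ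
    apply inv_anti₀ hc
    nlinarith

lemma rfun_one {ρ : ℝ} (N : ℕ) : rfun ρ N 1 = (ρ * ((N - 1 : ℕ) : ℝ))⁻¹ := by
  simp [rfun]

noncomputable def Sfun (ρ : ℝ) (N k : ℕ) : ℝ := ∑ i ∈ Finset.range k, rfun ρ N i

lemma Sfun_one (ρ : ℝ) (N : ℕ) : Sfun ρ N 1 = 1 := by
  simp [Sfun, rfun_zero]

lemma Sfun_succ (ρ : ℝ) (N k : ℕ) : Sfun ρ N (k + 1) = Sfun ρ N k + rfun ρ N k := by
  simp [Sfun, Finset.sum_range_succ]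

lemma one_le_Sfun {ρ : ℝ} (hρ : 0 < ρ) {N k : ℕ} (hk : 1 ≤ k) : 1 ≤ Sfun ρ N k := by
  have h0 : rfun ρ N 0 ≤ Sfun ρ N k := by
    apply Finset.single_le_sum (fun i _ => rfun_nonneg hρ N i)
    simpa using (show 0 < k by omega)
  rw [rfun_zero] at h0; exact h0

lemma Sfun_pos {ρ : ℝ} (hρ : 0 < ρ) {N k : ℕ} (hk : 1 ≤ k) : 0 < Sfun ρ N k :=
  lt_of_lt_of_le one_pos (one_le_Sfun hρ hk)

lemma Sfun_mono {ρ : ℝ} (hρ : 0 < ρ) (N : ℕ) {k m : ℕ} (h : k ≤ m) :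
    Sfun ρ N k ≤ Sfun ρ N m := by
  apply Finset.sum_le_sum_of_subset_of_nonneg (Finset.range_subset_range.mpr h)
  exact fun i _ _ => rfun_nonneg hρ N i

lemma tailP_eq {ρ : ℝ} {N k : ℕ} (hk : k ≤ N) : tailP ρ N k = (Sfun ρ N k)⁻¹ := by
  simp [tailP, hk, Sfun]

lemma tailP_nonneg {ρ : ℝ} (hρ : 0 < ρ) (N k : ℕ) : 0 ≤ tailP ρ N k := by
  unfold tailP
  split
  · exact inv_nonneg.mpr (Finset.sum_nonneg fun i _ => rfun_nonneg hρ N i)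
  · exact le_rfl

lemma tailP_le_one {ρ : ℝ} (hρ : 0 < ρ) {N k : ℕ} (hk : 1 ≤ k) : tailP ρ N k ≤ 1 := by
  unfold tailP
  split
  · exact inv_le_one_of_one_le₀ (one_le_Sfun hρ hk)
  · exact zero_le_one

lemma pmfP_eq {ρ : ℝ} (hρ : 0 < ρ) {N k : ℕ} (h1 : 1 ≤ k) (h2 : k + 1 ≤ N) :
    pmfP ρ N k = rfun ρ N k / (Sfun ρ N k * Sfun ρ N (k + 1)) := by
  have hS1 : (0:ℝ) < Sfun ρ N k := Sfun_pos hρ h1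
  have hS2 : (0:ℝ) < Sfun ρ N (k+1) := Sfun_pos hρ (by omega)
  rw [Sfun_succ] at hS2
  rw [pmfP, tailP_eq (by omega), tailP_eq h2, Sfun_succ]
  field_simp
  ring

lemma pmfP_top {ρ : ℝ} {N : ℕ} (hN : 1 ≤ N) : pmfP ρ N N = (Sfun ρ N N)⁻¹ := by
  rw [pmfP, tailP_eq le_rfl, tailP]
  simp

lemma pmfP_nonneg {ρ : ℝ} (hρ : 0 < ρ) {N k : ℕ} (h1 : 1 ≤ k) (h2 : k ≤ N) :
    0 ≤ pmfP ρ N k := by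
  rcases eq_or_lt_of_le h2 with rfl | h
  · rw [pmfP_top h1]
    exact inv_nonneg.mpr (Sfun_pos hρ h1).le
  · rw [pmfP_eq hρ h1 h]
    apply div_nonneg (rfun_nonneg hρ N k)
    exact mul_nonneg (Sfun_pos hρ h1).le (Sfun_pos hρ (by omega)).le

lemma pmfP_le_rfun {ρ : ℝ} (hρ : 0 < ρ) {N k : ℕ} (h1 : 1 ≤ k) (h2 : k + 1 ≤ N) :
    pmfP ρ N k ≤ rfun ρ N k := by
  rw [pmfP_eq hρ h1 h2]
  apply div_le_self (rfun_nonneg hρ N k)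
  have := one_le_Sfun hρ (N := N) h1
  have := one_le_Sfun hρ (N := N) (show 1 ≤ k + 1 by omega)
  nlinarith

lemma pmfP_le_one {ρ : ℝ} (hρ : 0 < ρ) {N : ℕ} (hN : 1 ≤ N) : pmfP ρ N N ≤ 1 := by
  rw [pmfP_top hN]
  exact inv_le_one_of_one_le₀ (one_le_Sfun hρ hN)

lemma EH_le {ρ : ℝ} (hρ : 0 < ρ) (N : ℕ) : EH ρ N ≤ N := by
  have : EH ρ N ≤ ∑ k ∈ Finset.Icc 1 N, (1:ℝ) :=
    Finset.sum_le_sum fun k hk => tailP_le_one hρ (Finset.mem_Icc.mp hk).1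
  simpa using this

lemma middle_term_le {n i : ℕ} (hn : 3 ≤ n) (hi : 2 ≤ i) (hi' : i ≤ n - 1) :
    ((n + 1 - i : ℕ) : ℝ) * ((n.choose i : ℝ))⁻¹ ≤ 2 / n := by
  have hn0 : (0:ℝ) < (n:ℝ) := by exact_mod_cast (by omega : 0 < n)
  rcases le_or_gt i (n - 2) with h | h
  · have hch : (n.choose 2 : ℕ) ≤ n.choose i := choose_le_of_between hi (by omega)
    have hch2 : ((n.choose 2 : ℕ) : ℝ) = n * ((n:ℝ) - 1) / 2 := Nat.cast_choose_two (K := ℝ) n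
    have hn3 : (3:ℝ) ≤ (n:ℝ) := by exact_mod_cast hn
    have hcpos : (0:ℝ) < ((n.choose 2 : ℕ) : ℝ) := by
      rw [hch2]; nlinarith
    have hinv : ((n.choose i : ℝ))⁻¹ ≤ ((n.choose 2 : ℕ) : ℝ)⁻¹ := by
      apply inv_anti₀ hcpos
      exact_mod_cast hch
    have hnum : ((n + 1 - i : ℕ) : ℝ) ≤ (n:ℝ) - 1 := by
      have : (n + 1 - i : ℕ) ≤ n - 1 := by omega
      have h2 : ((n - 1 : ℕ) : ℝ) = (n:ℝ) - 1 := by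
        push_cast [Nat.cast_sub (by omega : 1 ≤ n)]; ring
      calc ((n + 1 - i : ℕ) : ℝ) ≤ ((n - 1 : ℕ) : ℝ) := by exact_mod_cast this
        _ = (n:ℝ) - 1 := h2
    have hnn : (0:ℝ) ≤ ((n + 1 - i : ℕ) : ℝ) := Nat.cast_nonneg _
    calc ((n + 1 - i : ℕ) : ℝ) * ((n.choose i : ℝ))⁻¹
        ≤ ((n:ℝ) - 1) * ((n.choose 2 : ℕ) : ℝ)⁻¹ := by
          apply mul_le_mul hnum hinv (inv_nonneg.mpr (Nat.cast_nonneg _)) (by linarith)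
      _ = 2 / n := by
          rw [hch2]
          have hne : (n:ℝ) - 1 ≠ 0 := by nlinarith
          field_simp
  · have hieq : i = n - 1 := by omega
    subst hieq
    have h1 : n.choose (n - 1) = n := by
      have := Nat.choose_symm (show 1 ≤ n by omega)
      simpa [Nat.choose_one_right] using this
    have h2 : (n + 1 - (n - 1) : ℕ) = 2 := by omega
    rw [h1, h2]
    norm_num [div_eq_mul_inv]

lemma key_sum {n : ℕ} (hn : 3 ≤ n) :
    ∑ i ∈ Finset.Icc 1 n, ((n + 1 - i : ℕ) : ℝ) * ((n.choose i : ℝ))⁻¹ ≤ 4 := by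
  have hn0 : (0:ℝ) < (n:ℝ) := by exact_mod_cast (by omega : 0 < n)
  have hdec : Finset.Icc 1 n = insert 1 (insert n (Finset.Icc 2 (n - 1))) := by
    ext x
    simp only [Finset.mem_Icc, Finset.mem_insert]
    omega
  have h1n : (1:ℕ) ∉ insert n (Finset.Icc 2 (n - 1)) := by
    simp only [Finset.mem_insert, Finset.mem_Icc]
    omega
  have hnn : n ∉ Finset.Icc 2 (n - 1) := by
    simp only [Finset.mem_Icc]
    omega
  rw [hdec, Finset.sum_insert h1n, Finset.sum_insert hnn]
  have t1 : ((n + 1 - 1 : ℕ) : ℝ) * ((n.choose 1 : ℝ))⁻¹ = 1 := by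
    simp only [Nat.add_sub_cancel, Nat.choose_one_right]
    field_simp
  have tn : ((n + 1 - n : ℕ) : ℝ) * ((n.choose n : ℝ))⁻¹ = 1 := by
    have : (n + 1 - n : ℕ) = 1 := by omega
    simp [this, Nat.choose_self]
  have hmid : ∑ i ∈ Finset.Icc 2 (n - 1), ((n + 1 - i : ℕ) : ℝ) * ((n.choose i : ℝ))⁻¹
      ≤ (Finset.Icc 2 (n - 1)).card • (2 / (n:ℝ)) := by
    apply Finset.sum_le_card_nsmul
    intro i hi
    obtain ⟨h2, h3⟩ := Finset.mem_Icc.mp hi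
    exact middle_term_le hn h2 h3
  have hcard : ((Finset.Icc 2 (n - 1)).card : ℝ) ≤ (n:ℝ) := by
    rw [Nat.card_Icc]
    exact_mod_cast (by omega : n - 1 + 1 - 2 ≤ n)
  have hmid2 : ∑ i ∈ Finset.Icc 2 (n - 1), ((n + 1 - i : ℕ) : ℝ) * ((n.choose i : ℝ))⁻¹ ≤ 2 := by
    refine le_trans hmid ?_
    rw [nsmul_eq_mul]
    calc ((Finset.Icc 2 (n - 1)).card : ℝ) * (2 / n) ≤ (n:ℝ) * (2 / n) := by
          apply mul_le_mul_of_nonneg_right hcard (by positivity)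
      _ = 2 := by field_simp
  rw [t1, tn]
  linarith

lemma one_sub_inv_le {S : ℝ} (hS : 1 ≤ S) : 1 - S⁻¹ ≤ S - 1 := by
  have hS0 : (0:ℝ) < S := by linarith
  nlinarith [mul_nonneg (sq_nonneg (S - 1)) (inv_nonneg.mpr hS0.le),
    mul_inv_cancel₀ hS0.ne', sq_nonneg (S - 1)]

lemma Sfun_sub_one {ρ : ℝ} {N k : ℕ} (hk : 1 ≤ k) :
    Sfun ρ N k - 1 = ∑ i ∈ Finset.Ico 1 k, rfun ρ N i := by
  have : Sfun ρ N k = rfun ρ N 0 + ∑ i ∈ Finset.Ico 1 k, rfun ρ N i := by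
    rw [Sfun, Finset.range_eq_Ico]
    exact Finset.sum_eq_sum_Ico_succ_bot (by omega) _
  rw [this, rfun_zero]
  ring

lemma EH_ge {ρ : ℝ} (hρ : 1 ≤ ρ) {N : ℕ} (hN : 4 ≤ N) : (N:ℝ) - 4 ≤ EH ρ N := by
  have hρ0 : (0:ℝ) < ρ := by linarith
  obtain ⟨n, rfl⟩ : ∃ n, N = n + 1 := ⟨N - 1, by omega⟩
  have hn : 3 ≤ n := by omega
  set c : ℕ → ℝ := fun i => (((n + 1 - 1).choose i : ℝ))⁻¹ with hc
  have hsub : ((n+1:ℕ):ℝ) - EH ρ (n+1) = ∑ k ∈ Finset.Icc 1 (n+1), (1 - tailP ρ (n+1) k) := by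
    rw [Finset.sum_sub_distrib, EH]
    simp [Nat.card_Icc]
  have hterm : ∀ k ∈ Finset.Icc 1 (n+1),
      1 - tailP ρ (n+1) k ≤ ∑ i ∈ Finset.Ico 1 k, c i := by
    intro k hk
    obtain ⟨hk1, hk2⟩ := Finset.mem_Icc.mp hk
    have h1 : 1 - tailP ρ (n+1) k ≤ Sfun ρ (n+1) k - 1 := by
      rw [tailP_eq hk2]
      exact one_sub_inv_le (one_le_Sfun hρ0 hk1)
    have h2 : Sfun ρ (n+1) k - 1 ≤ ∑ i ∈ Finset.Ico 1 k, c i := by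
      rw [Sfun_sub_one hk1]
      exact Finset.sum_le_sum fun i _ => rfun_le_inv_choose hρ (n+1) i
    linarith
  have hswap : ∑ k ∈ Finset.Icc 1 (n+1), ∑ i ∈ Finset.Ico 1 k, c i
      = ∑ i ∈ Finset.Ico 1 (n+1), ∑ k ∈ Finset.Icc (i+1) (n+1), c i := by
    apply Finset.sum_comm'
    intro k i
    simp only [Finset.mem_Icc, Finset.mem_Ico]
    omega
  have hinner : ∀ i ∈ Finset.Ico 1 (n+1),
      ∑ k ∈ Finset.Icc (i+1) (n+1), c i = ((n + 1 - i : ℕ) : ℝ) * c i := by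
    intro i hi
    rw [Finset.sum_const, Nat.card_Icc, nsmul_eq_mul]
    congr 2
    omega
  have hkey : ∑ i ∈ Finset.Ico 1 (n+1), ((n + 1 - i : ℕ) : ℝ) * c i ≤ 4 := by
    have hIcoIcc : Finset.Ico 1 (n+1) = Finset.Icc 1 n := by
      ext x; simp [Finset.mem_Ico, Finset.mem_Icc]
    rw [hIcoIcc]
    have := key_sum hn
    simpa [hc] using this
  have : ((n+1:ℕ):ℝ) - EH ρ (n+1) ≤ 4 := by
    rw [hsub]
    calc ∑ k ∈ Finset.Icc 1 (n+1), (1 - tailP ρ (n+1) k)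
        ≤ ∑ k ∈ Finset.Icc 1 (n+1), ∑ i ∈ Finset.Ico 1 k, c i := Finset.sum_le_sum hterm
      _ = ∑ i ∈ Finset.Ico 1 (n+1), ∑ k ∈ Finset.Icc (i+1) (n+1), c i := hswap
      _ = ∑ i ∈ Finset.Ico 1 (n+1), ((n + 1 - i : ℕ) : ℝ) * c i :=
          Finset.sum_congr rfl hinner
      _ ≤ 4 := hkey
  linarith

lemma cast_sub_one {N : ℕ} (hN : 1 ≤ N) : ((N - 1 : ℕ) : ℝ) = (N:ℝ) - 1 := by
  push_cast [Nat.cast_sub hN]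
  ring

lemma VarH_ge {ρ : ℝ} (hρ : 1 ≤ ρ) {N : ℕ} (hN : 100 ≤ N) : (N:ℝ)/ρ - 10 ≤ VarH ρ N := by
  have hρ0 : (0:ℝ) < ρ := by linarith
  have hE1 : (N:ℝ) - 4 ≤ EH ρ N := EH_ge hρ (by omega)
  have hE2 : EH ρ N ≤ N := EH_le hρ0 N
  have hNr : (100:ℝ) ≤ (N:ℝ) := by exact_mod_cast hN
  -- single term bound
  have hsingle : ((1:ℝ) - EH ρ N) ^ 2 * pmfP ρ N 1 ≤ VarH ρ N := by
    have h := Finset.single_le_sum (f := fun k : ℕ => ((k:ℝ) - EH ρ N) ^ 2 * pmfP ρ N k)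
      (fun k hk => mul_nonneg (sq_nonneg _)
        (pmfP_nonneg hρ0 (Finset.mem_Icc.mp hk).1 (Finset.mem_Icc.mp hk).2))
      (show 1 ∈ Finset.Icc 1 N by simp only [Finset.mem_Icc]; omega)
    simpa [VarH] using h
  -- pmf 1 value
  set d : ℝ := (N:ℝ) - 1 with hd
  have hd99 : (99:ℝ) ≤ d := by rw [hd]; linarith
  set x : ℝ := (ρ * d)⁻¹ with hx
  have hr1 : rfun ρ N 1 = x := by
    rw [rfun_one, cast_sub_one (by omega), hx, hd]
  have hx0 : 0 < x := by
    rw [hx]; positivity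
  have hS2 : Sfun ρ N (1 + 1) = 1 + x := by
    rw [Sfun_succ, Sfun_one, hr1]
  have hpmf1 : pmfP ρ N 1 = x / (1 + x) := by
    rw [pmfP_eq hρ0 le_rfl (by omega), Sfun_one, hS2, hr1, one_mul]
  have hpmf1' : x - x^2 ≤ pmfP ρ N 1 := by
    rw [hpmf1, le_div_iff₀ (by positivity : (0:ℝ) < 1 + x)]
    nlinarith
  -- square bound
  have hsq : ((N:ℝ) - 5) ^ 2 ≤ ((1:ℝ) - EH ρ N) ^ 2 := by
    nlinarith
  have hmain : ((N:ℝ) - 5) ^ 2 * (x - x^2) ≤ ((1:ℝ) - EH ρ N) ^ 2 * pmfP ρ N 1 := by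
    have h1 : 0 ≤ x - x^2 := by
      have : x ≤ 1 := by
        rw [hx]
        apply inv_le_one_of_one_le₀
        nlinarith
      nlinarith
    apply mul_le_mul hsq hpmf1' h1 (sq_nonneg _)
  -- arithmetic: (N-5)^2 * (x - x^2) ≥ N/ρ - 10
  have hA : ((N:ℝ) - 9)/ρ ≤ ((N:ℝ) - 5)^2 * x := by
    rw [hx, ← div_eq_mul_inv, div_le_div_iff₀ hρ0 (by positivity), hd]
    have h16 : ((N:ℝ)-9)*((N:ℝ)-1) ≤ ((N:ℝ)-5)^2 := by nlinarith
    nlinarith [mul_le_mul_of_nonneg_right h16 hρ0.le]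
  have hB : ((N:ℝ) - 5)^2 * x^2 ≤ 1 := by
    have hxd : x ≤ d⁻¹ := by
      rw [hx]
      apply inv_anti₀ (by linarith)
      nlinarith
    have h1 : ((N:ℝ) - 5) * x ≤ 1 := by
      have h2 : ((N:ℝ) - 5) * x ≤ d * d⁻¹ := by
        apply mul_le_mul (by rw [hd]; linarith) hxd hx0.le (by linarith)
      rwa [mul_inv_cancel₀ (by linarith : d ≠ 0)] at h2
    calc ((N:ℝ) - 5)^2 * x^2 = (((N:ℝ) - 5) * x)^2 := by ring
      _ ≤ 1 := by nlinarith [mul_nonneg (by linarith : (0:ℝ) ≤ (N:ℝ) - 5) hx0.le]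
  have hC : (N:ℝ)/ρ - 10 ≤ ((N:ℝ) - 9)/ρ - 1 := by
    rw [sub_div]
    have : (9:ℝ)/ρ ≤ 9 := div_le_self (by norm_num) hρ
    linarith
  have : (N:ℝ)/ρ - 10 ≤ ((N:ℝ) - 5)^2 * (x - x^2) := by
    have expand : ((N:ℝ) - 5)^2 * (x - x^2) = ((N:ℝ) - 5)^2 * x - ((N:ℝ) - 5)^2 * x^2 := by ring
    rw [expand]
    linarith
  linarith

lemma cast_choose_three {n : ℕ} (hn : 3 ≤ n) :
    ((n.choose 3 : ℕ) : ℝ) = (n:ℝ) * ((n:ℝ) - 1) * ((n:ℝ) - 2) / 6 := by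
  have h := Nat.choose_succ_right_eq n 2
  have hcast : ((n.choose 3 : ℕ) : ℝ) * 3 = ((n.choose 2 : ℕ) : ℝ) * ((n:ℝ) - 2) := by
    have h2 : ((n - 2 : ℕ) : ℝ) = (n:ℝ) - 2 := by
      push_cast [Nat.cast_sub (by omega : 2 ≤ n)]; ring
    have h3 : ((n.choose 3 * 3 : ℕ) : ℝ) = ((n.choose 2 * (n - 2) : ℕ) : ℝ) := by
      exact_mod_cast congrArg (fun m : ℕ => (m : ℝ)) h
    push_cast at h3
    rw [h2] at h3
    linarith
  rw [Nat.cast_choose_two] at hcast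
  linarith

lemma var_mid_term {n k : ℕ} (hn : 99 ≤ n) (hk : 3 ≤ k) (hk' : k ≤ n - 1) :
    ((n:ℝ) + 5 - (k:ℝ)) ^ 2 * ((n.choose k : ℝ))⁻¹ ≤ 48 / n := by
  have hn0 : (0:ℝ) < (n:ℝ) := by exact_mod_cast (by omega : 0 < n)
  have hnr : (99:ℝ) ≤ (n:ℝ) := by exact_mod_cast hn
  have hkr : (3:ℝ) ≤ (k:ℝ) := by exact_mod_cast hk
  have hkn : (k:ℝ) ≤ (n:ℝ) := by exact_mod_cast (by omega : k ≤ n)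
  have hnum : ((n:ℝ) + 5 - (k:ℝ)) ^ 2 ≤ ((n:ℝ) + 2) ^ 2 := by nlinarith
  have hnumnn : (0:ℝ) ≤ (n:ℝ) + 5 - (k:ℝ) := by linarith
  rcases le_or_gt k (n - 3) with h | h
  · have hch : (n.choose 3 : ℕ) ≤ n.choose k := choose_le_of_between hk (by omega)
    have hval : ((n.choose 3 : ℕ) : ℝ) = (n:ℝ) * ((n:ℝ) - 1) * ((n:ℝ) - 2) / 6 :=
      cast_choose_three (by omega)
    have hcpos : (0:ℝ) < ((n.choose 3 : ℕ) : ℝ) := by rw [hval]; nlinarith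
    have hinv : ((n.choose k : ℝ))⁻¹ ≤ ((n.choose 3 : ℕ) : ℝ)⁻¹ := by
      apply inv_anti₀ hcpos
      exact_mod_cast hch
    calc ((n:ℝ) + 5 - (k:ℝ)) ^ 2 * ((n.choose k : ℝ))⁻¹
        ≤ ((n:ℝ) + 2) ^ 2 * ((n.choose 3 : ℕ) : ℝ)⁻¹ :=
          mul_le_mul hnum hinv (inv_nonneg.mpr (Nat.cast_nonneg _)) (by positivity)
      _ ≤ 48 / n := by
          rw [hval, ← div_eq_mul_inv, div_le_div_iff₀ (by nlinarith) hn0]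
          nlinarith
  · rcases (by omega : k = n - 2 ∨ k = n - 1) with rfl | rfl
    · have h1 : n.choose (n - 2) = n.choose 2 := by
        have := Nat.choose_symm (show 2 ≤ n by omega)
        simpa using this
      have h2 : ((n - 2 : ℕ) : ℝ) = (n:ℝ) - 2 := by
        push_cast [Nat.cast_sub (by omega : 2 ≤ n)]; ring
      rw [h1, h2, Nat.cast_choose_two]
      have hnum7 : ((n:ℝ) + 5 - ((n:ℝ) - 2)) ^ 2 = 49 := by ring
      rw [hnum7]
      rw [← div_eq_mul_inv, div_le_div_iff₀ (by nlinarith) hn0]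
      nlinarith
    · have h1 : n.choose (n - 1) = n := by
        have := Nat.choose_symm (show 1 ≤ n by omega)
        simpa [Nat.choose_one_right] using this
      have h2 : ((n - 1 : ℕ) : ℝ) = (n:ℝ) - 1 := by
        push_cast [Nat.cast_sub (by omega : 1 ≤ n)]; ring
      rw [h1, h2]
      have hnum6 : ((n:ℝ) + 5 - ((n:ℝ) - 1)) ^ 2 = 36 := by ring
      rw [hnum6, ← div_eq_mul_inv, div_le_div_iff₀ hn0 hn0]
      nlinarith

lemma var_tail_sum {n : ℕ} (hn : 99 ≤ n) :
    ∑ k ∈ Finset.Icc 2 n, ((n:ℝ) + 5 - (k:ℝ)) ^ 2 * ((n.choose k : ℝ))⁻¹ ≤ 81 := by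
  have hn0 : (0:ℝ) < (n:ℝ) := by exact_mod_cast (by omega : 0 < n)
  have hnr : (99:ℝ) ≤ (n:ℝ) := by exact_mod_cast hn
  have hdec : Finset.Icc 2 n = insert 2 (insert n (Finset.Icc 3 (n - 1))) := by
    ext x
    simp only [Finset.mem_Icc, Finset.mem_insert]
    omega
  have h2n : (2:ℕ) ∉ insert n (Finset.Icc 3 (n - 1)) := by
    simp only [Finset.mem_insert, Finset.mem_Icc]
    omega
  have hnn : n ∉ Finset.Icc 3 (n - 1) := by
    simp only [Finset.mem_Icc]; omega
  rw [hdec, Finset.sum_insert h2n, Finset.sum_insert hnn]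
  have t2 : ((n:ℝ) + 5 - (2:ℕ)) ^ 2 * ((n.choose 2 : ℝ))⁻¹ ≤ 8 := by
    rw [Nat.cast_choose_two, ← div_eq_mul_inv, div_le_iff₀ (by nlinarith)]
    push_cast
    nlinarith
  have tn : ((n:ℝ) + 5 - (n:ℝ)) ^ 2 * ((n.choose n : ℝ))⁻¹ ≤ 25 := by
    rw [Nat.choose_self]
    norm_num
  have hmid : ∑ k ∈ Finset.Icc 3 (n - 1), ((n:ℝ) + 5 - (k:ℝ)) ^ 2 * ((n.choose k : ℝ))⁻¹
      ≤ (Finset.Icc 3 (n - 1)).card • (48 / (n:ℝ)) := by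
    apply Finset.sum_le_card_nsmul
    intro k hk
    obtain ⟨h3, h4⟩ := Finset.mem_Icc.mp hk
    exact var_mid_term hn h3 h4
  have hcard : ((Finset.Icc 3 (n - 1)).card : ℝ) ≤ (n:ℝ) := by
    rw [Nat.card_Icc]
    exact_mod_cast (by omega : n - 1 + 1 - 3 ≤ n)
  have hmid2 : ∑ k ∈ Finset.Icc 3 (n - 1), ((n:ℝ) + 5 - (k:ℝ)) ^ 2 * ((n.choose k : ℝ))⁻¹ ≤ 48 := by
    refine le_trans hmid ?_
    rw [nsmul_eq_mul]
    calc ((Finset.Icc 3 (n - 1)).card : ℝ) * (48 / n) ≤ (n:ℝ) * (48 / n) :=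
          mul_le_mul_of_nonneg_right hcard (by positivity)
      _ = 48 := by field_simp
  push_cast at t2 ⊢
  linarith

lemma VarH_le {ρ : ℝ} (hρ : 1 ≤ ρ) {N : ℕ} (hN : 100 ≤ N) : VarH ρ N ≤ (N:ℝ)/ρ + 110 := by
  have hρ0 : (0:ℝ) < ρ := by linarith
  have hE1 : (N:ℝ) - 4 ≤ EH ρ N := EH_ge hρ (by omega)
  have hE2 : EH ρ N ≤ N := EH_le hρ0 N
  have hNr : (100:ℝ) ≤ (N:ℝ) := by exact_mod_cast hN
  -- step 1
  have step1 : VarH ρ N ≤ ∑ k ∈ Finset.Icc 1 N, ((N:ℝ) + 4 - (k:ℝ)) ^ 2 * pmfP ρ N k := by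
    apply Finset.sum_le_sum
    intro k hk
    obtain ⟨h1, h2⟩ := Finset.mem_Icc.mp hk
    have hkr : (k:ℝ) ≤ (N:ℝ) := by exact_mod_cast h2
    apply mul_le_mul_of_nonneg_right _ (pmfP_nonneg hρ0 h1 h2)
    apply sq_le_sq' <;> linarith
  -- split off k = N
  have hNmem : Finset.Icc 1 N = insert N (Finset.Icc 1 (N - 1)) := by
    ext x
    simp only [Finset.mem_Icc, Finset.mem_insert]
    omega
  have hNnot : N ∉ Finset.Icc 1 (N - 1) := by
    simp only [Finset.mem_Icc]; omega
  have step2 : ∑ k ∈ Finset.Icc 1 N, ((N:ℝ) + 4 - (k:ℝ)) ^ 2 * pmfP ρ N k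
      = ((N:ℝ) + 4 - (N:ℝ)) ^ 2 * pmfP ρ N N
        + ∑ k ∈ Finset.Icc 1 (N - 1), ((N:ℝ) + 4 - (k:ℝ)) ^ 2 * pmfP ρ N k := by
    rw [hNmem, Finset.sum_insert hNnot]
  have htop : ((N:ℝ) + 4 - (N:ℝ)) ^ 2 * pmfP ρ N N ≤ 16 := by
    have h1 : ((N:ℝ) + 4 - (N:ℝ)) ^ 2 = 16 := by ring
    rw [h1]
    have := pmfP_le_one hρ0 (show 1 ≤ N by omega)
    linarith
  -- step 3 : pmf ≤ rfun on Icc 1 (N-1)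
  have step3 : ∑ k ∈ Finset.Icc 1 (N - 1), ((N:ℝ) + 4 - (k:ℝ)) ^ 2 * pmfP ρ N k
      ≤ ∑ k ∈ Finset.Icc 1 (N - 1), ((N:ℝ) + 4 - (k:ℝ)) ^ 2 * rfun ρ N k := by
    apply Finset.sum_le_sum
    intro k hk
    obtain ⟨h1, h2⟩ := Finset.mem_Icc.mp hk
    exact mul_le_mul_of_nonneg_left (pmfP_le_rfun hρ0 h1 (by omega)) (sq_nonneg _)
  -- split off k = 1
  have h1mem : Finset.Icc 1 (N - 1) = insert 1 (Finset.Icc 2 (N - 1)) := by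
    ext x
    simp only [Finset.mem_Icc, Finset.mem_insert]
    omega
  have h1not : (1:ℕ) ∉ Finset.Icc 2 (N - 1) := by
    simp only [Finset.mem_Icc]; omega
  have step4 : ∑ k ∈ Finset.Icc 1 (N - 1), ((N:ℝ) + 4 - (k:ℝ)) ^ 2 * rfun ρ N k
      = ((N:ℝ) + 3) ^ 2 * rfun ρ N 1
        + ∑ k ∈ Finset.Icc 2 (N - 1), ((N:ℝ) + 4 - (k:ℝ)) ^ 2 * rfun ρ N k := by
    rw [h1mem, Finset.sum_insert h1not]
    congr 2
    push_cast
    ring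
  -- first term
  have hterm1 : ((N:ℝ) + 3) ^ 2 * rfun ρ N 1 ≤ (N:ℝ)/ρ + 9 := by
    rw [rfun_one, cast_sub_one (by omega)]
    have hd0 : (0:ℝ) < (N:ℝ) - 1 := by linarith
    have key : ((N:ℝ) + 3) ^ 2 * (ρ * ((N:ℝ) - 1))⁻¹ ≤ ((N:ℝ) + 9)/ρ := by
      rw [← div_eq_mul_inv, div_le_div_iff₀ (by positivity) hρ0]
      have h16 : ((N:ℝ)+3)^2 ≤ ((N:ℝ)+9)*((N:ℝ)-1) := by nlinarith
      nlinarith [mul_le_mul_of_nonneg_right h16 hρ0.le]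
    have h9 : ((N:ℝ) + 9)/ρ = (N:ℝ)/ρ + 9/ρ := by ring
    have h9' : (9:ℝ)/ρ ≤ 9 := div_le_self (by norm_num) hρ
    linarith
  -- tail sum
  have htail : ∑ k ∈ Finset.Icc 2 (N - 1), ((N:ℝ) + 4 - (k:ℝ)) ^ 2 * rfun ρ N k ≤ 81 := by
    have hb : ∀ k ∈ Finset.Icc 2 (N - 1),
        ((N:ℝ) + 4 - (k:ℝ)) ^ 2 * rfun ρ N k
          ≤ ((N:ℝ) + 4 - (k:ℝ)) ^ 2 * (((N - 1).choose k : ℝ))⁻¹ :=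
      fun k _ => mul_le_mul_of_nonneg_left (rfun_le_inv_choose hρ N k) (sq_nonneg _)
    refine le_trans (Finset.sum_le_sum hb) ?_
    have hcast : ∀ k ∈ Finset.Icc 2 (N - 1),
        ((N:ℝ) + 4 - (k:ℝ)) ^ 2 * (((N - 1).choose k : ℝ))⁻¹
          = (((N - 1 : ℕ):ℝ) + 5 - (k:ℝ)) ^ 2 * (((N - 1).choose k : ℝ))⁻¹ := by
      intro k _
      rw [cast_sub_one (by omega)]
      ring_nf
    rw [Finset.sum_congr rfl hcast]
    exact var_tail_sum (by omega)
  calc VarH ρ N ≤ _ := step1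
    _ = _ := step2
    _ ≤ 16 + (((N:ℝ) + 3) ^ 2 * rfun ρ N 1
        + ∑ k ∈ Finset.Icc 2 (N - 1), ((N:ℝ) + 4 - (k:ℝ)) ^ 2 * rfun ρ N k) := by
        rw [step4] at step3
        linarith
    _ ≤ 16 + (((N:ℝ)/ρ + 9) + 81) := by linarith
    _ ≤ (N:ℝ)/ρ + 110 := by linarith


theorem var_height_asymptotics_rho_ge_one (ρ : ℝ) (hρ : 1 ≤ ρ) :
    Tendsto (fun N : ℕ => VarH ρ N / N) atTop (𝓝 (1 / ρ)) := by
  have hρ0 : (0:ℝ) < ρ := by linarith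
  have hlow : Tendsto (fun N : ℕ => 1/ρ - 10/(N:ℝ)) atTop (𝓝 (1/ρ)) := by
    have h := tendsto_const_div_atTop_nhds_zero_nat (10:ℝ)
    simpa using (tendsto_const_nhds (x := 1/ρ) (f := atTop)).sub h
  have hhigh : Tendsto (fun N : ℕ => 1/ρ + 110/(N:ℝ)) atTop (𝓝 (1/ρ)) := by
    have h := tendsto_const_div_atTop_nhds_zero_nat (110:ℝ)
    simpa using (tendsto_const_nhds (x := 1/ρ) (f := atTop)).add h
  apply tendsto_of_tendsto_of_tendsto_of_le_of_le' hlow hhigh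
  · filter_upwards [eventually_ge_atTop 100] with N hN
    have hN0 : (0:ℝ) < (N:ℝ) := by exact_mod_cast (by omega : 0 < N)
    have h := VarH_ge hρ hN
    calc 1/ρ - 10/(N:ℝ) = ((N:ℝ)/ρ - 10)/(N:ℝ) := by field_simp
      _ ≤ VarH ρ N / N := by gcongr
  · filter_upwards [eventually_ge_atTop 100] with N hN
    have hN0 : (0:ℝ) < (N:ℝ) := by exact_mod_cast (by omega : 0 < N)
    have h := VarH_le hρ hN
    calc VarH ρ N / N ≤ ((N:ℝ)/ρ + 110)/(N:ℝ) := by gcongr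
      _ = 1/ρ + 110/(N:ℝ) := by field_simp
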